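/- The graph constructed in the star-convex reduction is star-convex bipartite: there is a star T on X = A ∪ {u, u'} with centre u such that for every y ∈ Y = B ∪ Z ∪ {v}, the neighbourhood N(y) induces a subtree of T. -/

import Mathlib

open SimpleGraph

/-- The closed neighbourhood `N[v] = {v} ∪ N(v)` of a vertex. -/
def closedNbhd {V : Type*} (G : SimpleGraph V) (v : V) : Set V :=
  insert v (G.neighborSet v)

/-- `D` is a vertex-edge dominating set: every edge `uv` has a vertex of `D`
in `N[u] ∪ N[v]`. -/
def IsVEDomSet {V : Type*} (G : SimpleGraph V) (D : Set V) : Prop :=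
  ∀ ⦃u v : V⦄, G.Adj u v → ((closedNbhd G u ∪ closedNbhd G v) ∩ D).Nonempty

/-- The vertex-edge domination number `γ_ve(G)`. -/
noncomputable def vedNumber {V : Type*} (G : SimpleGraph V) : ℕ :=
  sInf {n | ∃ D : Set V, IsVEDomSet G D ∧ D.ncard = n}

/-- Vertices of the star-convex reduction graph: element vertices `a i`,
set vertices `b j`, pendants `z i`, and the special vertices `u`, `v`, `u'`. -/
inductive SCVert (p q : ℕ) : Type
  | a : Fin p → SCVert p q
  | b : Fin q → SCVert p q
  | z : Fin p → SCVert p q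
  | u : SCVert p q
  | v : SCVert p q
  | u' : SCVert p q

/-- The edge relation of the star-convex reduction graph, for the membership
relation `M i j` meaning `s i ∈ C j`. -/
def scRel {p q : ℕ} (M : Fin p → Fin q → Prop) : SCVert p q → SCVert p q → Prop
  | .a i, .b j => M i j
  | .a i, .z i' => i = i'
  | .u, .b _ => True
  | .u, .v => True
  | .v, .u' => True
  | _, _ => False

/-- The star-convex reduction graph. -/
def scGraph {p q : ℕ} (M : Fin p → Fin q → Prop) : SimpleGraph (SCVert p q) :=
  SimpleGraph.fromRel (scRel M)

/-- The star on the vertices in `Xs` with centre `c` (as a graph on all of `V`). -/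
def starOn {V : Type*} (Xs : Set V) (c : V) : SimpleGraph V where
  Adj x y := x ≠ y ∧ x ∈ Xs ∧ y ∈ Xs ∧ (x = c ∨ y = c)
  symm := by
    constructor
    intro x y h
    exact ⟨h.1.symm, h.2.2.1, h.2.1, h.2.2.2.symm⟩
  loopless := ⟨fun x h => h.1 rfl⟩

lemma starOn_induce_preconnected_of_centre_mem {V : Type*} {Xs : Set V} {c : V}
    {S : Set V} (hS : S ⊆ Xs) (hc : c ∈ S) :
    ((starOn Xs c).induce S).Preconnected := by
  intro x y
  by_cases hxy : (x : V) = (y : V)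
  · cases Subtype.ext hxy; exact Reachable.refl _
  · have hxc : ((starOn Xs c).induce S).Reachable x ⟨c, hc⟩ := by
      by_cases h : (x : V) = c
      · exact ⟨(SimpleGraph.Walk.nil : ((starOn Xs c).induce S).Walk x x).copy rfl (Subtype.ext h)⟩
      · exact SimpleGraph.Adj.reachable ⟨h, hS x.2, hS hc, Or.inr rfl⟩
    have hyc : ((starOn Xs c).induce S).Reachable y ⟨c, hc⟩ := by
      by_cases h : (y : V) = c
      · exact ⟨(SimpleGraph.Walk.nil : ((starOn Xs c).induce S).Walk y y).copy rfl (Subtype.ext h)⟩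
      · exact SimpleGraph.Adj.reachable ⟨h, hS y.2, hS hc, Or.inr rfl⟩
    exact hxc.trans hyc.symm

lemma induce_preconnected_of_subsingleton {V : Type*} (G : SimpleGraph V)
    {S : Set V} (hS : S.Subsingleton) : (G.induce S).Preconnected := by
  intro x y
  cases Subtype.ext (hS x.2 y.2); exact Reachable.refl _

lemma scGraph_nbhd_z {p q : ℕ} (M : Fin p → Fin q → Prop) (i : Fin p) :
    (scGraph M).neighborSet (SCVert.z i) = {SCVert.a i} := by
  ext w
  cases w <;>
    simp [scGraph, scRel, neighborSet, SimpleGraph.fromRel_adj, eq_comm]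

lemma scGraph_nbhd_b {p q : ℕ} (M : Fin p → Fin q → Prop) (j : Fin q) :
    (scGraph M).neighborSet (SCVert.b j) =
      {w | ∃ i, M i j ∧ w = SCVert.a i} ∪ {SCVert.u} := by
  ext w
  cases w <;>
    simp [scGraph, scRel, neighborSet, SimpleGraph.fromRel_adj]

lemma scGraph_nbhd_v {p q : ℕ} (M : Fin p → Fin q → Prop) :
    (scGraph M).neighborSet (SCVert.v (p := p) (q := q)) =
      {SCVert.u, SCVert.u'} := by
  ext w
  cases w <;>
    simp [scGraph, scRel, neighborSet, SimpleGraph.fromRel_adj]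

theorem sc_star_convex {p q : ℕ} (M : Fin p → Fin q → Prop) :
    ∀ y : SCVert p q,
      y ∈ (Set.range (SCVert.z (p := p) (q := q)) ∪
            Set.range (SCVert.b (p := p) (q := q)) ∪ {SCVert.v}) →
      (scGraph M).neighborSet y ⊆
          (Set.range (SCVert.a (p := p) (q := q)) ∪ {SCVert.u, SCVert.u'}) ∧
        ((starOn (Set.range (SCVert.a (p := p) (q := q)) ∪ {SCVert.u, SCVert.u'})
            SCVert.u).induce ((scGraph M).neighborSet y)).Preconnected := by
  rintro y (h | h)
  · rcases h with ⟨i, rfl⟩ | ⟨j, rfl⟩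
    · rw [scGraph_nbhd_z]
      constructor
      · rintro w rfl
        exact Or.inl ⟨i, rfl⟩
      · exact induce_preconnected_of_subsingleton _ Set.subsingleton_singleton
    · rw [scGraph_nbhd_b]
      have hsub : ({w | ∃ i, M i j ∧ w = SCVert.a i} ∪ {SCVert.u} : Set (SCVert p q)) ⊆
          (Set.range (SCVert.a (p := p) (q := q)) ∪ {SCVert.u, SCVert.u'}) := by
        rintro w (⟨i, _, rfl⟩ | rfl)
        · exact Or.inl ⟨i, rfl⟩
        · exact Or.inr (Or.inl rfl)
      exact ⟨hsub, starOn_induce_preconnected_of_centre_mem hsub (Or.inr rfl)⟩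
  · rcases h with rfl
    rw [scGraph_nbhd_v]
    have hsub : ({SCVert.u, SCVert.u'} : Set (SCVert p q)) ⊆
        (Set.range (SCVert.a (p := p) (q := q)) ∪ {SCVert.u, SCVert.u'}) := by
      rintro w (rfl | rfl)
      · exact Or.inr (Or.inl rfl)
      · exact Or.inr (Or.inr rfl)
    exact ⟨hsub, starOn_induce_preconnected_of_centre_mem hsub (Or.inl rfl)⟩
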